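/- Let P₁, …, P_k be probability measures on ℝ with finite second moments and quantile functions F₁⁻¹, …, F_k⁻¹. For any probability measure J on ℝ^k whose i-th coordinate marginal is P_i for every i, Σ_{1 ≤ i < j ≤ k} ∫ (y_i − y_j)² dJ(y) ≥ Σ_{1 ≤ i < j ≤ k} ∫₀¹ (F_i⁻¹(u) − F_j⁻¹(u))² du, and equality holds for the quantile coupling, the pushforward of Lebesgue measure on (0,1) under u ↦ (F₁⁻¹(u), …, F_k⁻¹(u)). That is, the quantile process minimizes the quadratic causal effect ψ(J) = Σ_{i<j} E_J[(Y_i − Y_j)²] over all joint laws with the given marginals. -/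

import Mathlib

open MeasureTheory Set Filter
open scoped Topology

/-- The cumulative distribution function of a measure on ℝ. -/
noncomputable def cdf (P : MeasureTheory.Measure ℝ) (y : ℝ) : ℝ := (P (Set.Iic y)).toReal

/-- The quantile function (generalized inverse cdf) of a measure on ℝ. -/
noncomputable def quantile (P : MeasureTheory.Measure ℝ) (u : ℝ) : ℝ :=
  sInf {y : ℝ | u ≤ cdf P y}

variable (P : Measure ℝ) [IsProbabilityMeasure P]

lemma cdf_eq' : cdf P = fun y => ProbabilityTheory.cdf P y := by
  funext y; rw [ProbabilityTheory.cdf_eq_real]; rfl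

omit [IsProbabilityMeasure P] in
lemma cdf_nonneg' (y : ℝ) : 0 ≤ cdf P y := ENNReal.toReal_nonneg

lemma cdf_le_one' (y : ℝ) : cdf P y ≤ 1 := by
  rw [cdf_eq']; exact ProbabilityTheory.cdf_le_one P y

lemma cdf_mono' : Monotone (cdf P) := by
  rw [cdf_eq']; exact ProbabilityTheory.monotone_cdf P

lemma quantile_set_nonempty {u : ℝ} (hu : u < 1) : {y : ℝ | u ≤ cdf P y}.Nonempty := by
  have h : Tendsto (cdf P) atTop (𝓝 1) := by
    rw [cdf_eq']; exact ProbabilityTheory.tendsto_cdf_atTop P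
  obtain ⟨y, hy⟩ := (h.eventually_const_lt hu).exists
  exact ⟨y, hy.le⟩

lemma quantile_set_bddBelow {u : ℝ} (hu : 0 < u) : BddBelow {y : ℝ | u ≤ cdf P y} := by
  have h : Tendsto (cdf P) atBot (𝓝 0) := by
    rw [cdf_eq']; exact ProbabilityTheory.tendsto_cdf_atBot P
  obtain ⟨y₀, hy₀⟩ := (h.eventually_lt_const hu).exists
  refine ⟨y₀, fun y hy => ?_⟩
  by_contra hlt
  push_neg at hlt
  exact absurd (le_trans hy (cdf_mono' P hlt.le)) (not_le.2 hy₀)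

lemma quantile_le_iff {u : ℝ} (hu : u ∈ Ioo (0:ℝ) 1) (y : ℝ) :
    quantile P u ≤ y ↔ u ≤ cdf P y := by
  set S := {y : ℝ | u ≤ cdf P y} with hS
  have hne : S.Nonempty := quantile_set_nonempty P hu.2
  have hbdd : BddBelow S := quantile_set_bddBelow P hu.1
  constructor
  · intro h
    have hq : u ≤ cdf P (quantile P u) := by
      by_contra hc
      push_neg at hc
      have hrc : ContinuousWithinAt (fun y => ProbabilityTheory.cdf P y)
          (Ici (quantile P u)) (quantile P u) :=
        (ProbabilityTheory.cdf P).right_continuous _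
      rw [← cdf_eq'] at hrc
      have hev : ∀ᶠ x in 𝓝[Ici (quantile P u)] (quantile P u), cdf P x < u :=
        hrc.eventually_lt_const hc
      rw [Filter.eventually_iff, mem_nhdsGE_iff_exists_Ico_subset] at hev
      obtain ⟨b, hb, hsub⟩ := hev
      have hle : b ≤ quantile P u := by
        refine le_csInf hne fun y hy => ?_
        by_contra hyb
        push_neg at hyb
        have hylb : quantile P u ≤ y := csInf_le hbdd hy
        exact absurd (show cdf P y < u from hsub ⟨hylb, hyb⟩) (not_lt.2 hy)
      exact absurd hb (not_lt.2 hle)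
    exact le_trans hq (cdf_mono' P h)
  · intro h
    exact csInf_le hbdd h

lemma lt_quantile_iff {u : ℝ} (hu : u ∈ Ioo (0:ℝ) 1) (y : ℝ) :
    y < quantile P u ↔ cdf P y < u := by
  rw [← not_le, ← not_le, quantile_le_iff P hu y]

lemma monotoneOn_quantile : MonotoneOn (quantile P) (Ioo (0:ℝ) 1) := by
  intro u hu v hv huv
  exact csInf_le_csInf (quantile_set_bddBelow P hu.1) (quantile_set_nonempty P hv.2)
    (fun y hy => le_trans huv hy)

lemma aemeasurable_quantile : AEMeasurable (quantile P) (volume.restrict (Ioo (0:ℝ) 1)) :=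
  aemeasurable_restrict_of_monotoneOn measurableSet_Ioo (monotoneOn_quantile P)

instance : IsProbabilityMeasure (volume.restrict (Ioo (0:ℝ) 1)) := by
  constructor
  simp [Real.volume_Ioo]

lemma map_quantile : (volume.restrict (Ioo (0:ℝ) 1)).map (quantile P) = P := by
  refine MeasureTheory.Measure.ext_of_Iic _ _ (fun a => ?_)
  have hprob : IsProbabilityMeasure ((volume.restrict (Ioo (0:ℝ) 1)).map (quantile P)) :=
    Measure.isProbabilityMeasure_map (aemeasurable_quantile P)
  rw [Measure.map_apply_of_aemeasurable (aemeasurable_quantile P) measurableSet_Iic,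
    Measure.restrict_apply' measurableSet_Ioo]
  have hset : quantile P ⁻¹' Iic a ∩ Ioo 0 1 = Ioo (0:ℝ) 1 ∩ Iic (cdf P a) := by
    ext u
    simp only [mem_inter_iff, mem_preimage, mem_Iic, mem_Ioo]
    constructor
    · rintro ⟨h1, h2⟩
      exact ⟨h2, (quantile_le_iff P h2 a).mp h1⟩
    · rintro ⟨h2, h1⟩
      exact ⟨(quantile_le_iff P h2 a).mpr h1, h2⟩
  rw [hset]
  have h0 : 0 ≤ cdf P a := cdf_nonneg' P a
  have h1 : cdf P a ≤ 1 := cdf_le_one' P a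
  have hP : P (Iic a) = ENNReal.ofReal (cdf P a) := by
    rw [cdf]; exact (ENNReal.ofReal_toReal (measure_ne_top P _)).symm
  rw [hP]
  rcases eq_or_lt_of_le h1 with heq | hlt
  · rw [heq]
    have : Ioo (0:ℝ) 1 ∩ Iic (1:ℝ) = Ioo 0 1 := by
      ext u; simp only [mem_inter_iff, mem_Ioo, mem_Iic]
      exact ⟨fun h => h.1, fun h => ⟨h, h.2.le⟩⟩
    rw [this, Real.volume_Ioo]
    norm_num
  · have : Ioo (0:ℝ) 1 ∩ Iic (cdf P a) = Ioc 0 (cdf P a) := by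
      ext u; simp only [mem_inter_iff, mem_Ioo, mem_Iic, mem_Ioc]
      exact ⟨fun h => ⟨h.1.1, h.2⟩, fun h => ⟨⟨h.1, lt_of_le_of_lt h.2 hlt⟩, h.2⟩⟩
    rw [this, Real.volume_Ioc]
    norm_num

noncomputable def gfun (x s : ℝ) : ℝ :=
  (if s < x then (1:ℝ) else 0) - (if s < 0 then (1:ℝ) else 0)

lemma gfun_of_nonneg {x : ℝ} (h : 0 ≤ x) :
    gfun x = (Ico (0:ℝ) x).indicator (fun _ => (1:ℝ)) := by
  funext s
  simp only [gfun, Set.indicator_apply, mem_Ico]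
  split_ifs <;> simp_all <;> linarith

lemma gfun_of_neg {x : ℝ} (h : x < 0) :
    gfun x = fun s => -((Ico x (0:ℝ)).indicator (fun _ => (1:ℝ)) s) := by
  funext s
  simp only [gfun, Set.indicator_apply, mem_Ico]
  split_ifs <;> simp_all <;> linarith

lemma measurable_gfun : Measurable (fun p : ℝ × ℝ => gfun p.1 p.2) := by
  unfold gfun
  exact (Measurable.ite (measurableSet_lt measurable_snd measurable_fst)
      measurable_const measurable_const).sub
    (Measurable.ite (measurableSet_lt measurable_snd measurable_const)
      measurable_const measurable_const)

lemma integrable_indicator_Ico (a b : ℝ) :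
    Integrable ((Ico a b).indicator (fun _ => (1:ℝ))) volume := by
  rw [integrable_indicator_iff measurableSet_Ico]
  exact integrableOn_const (by rw [Real.volume_Ico]; exact ENNReal.ofReal_ne_top)

lemma integrable_gfun (x : ℝ) : Integrable (gfun x) volume := by
  rcases le_or_gt 0 x with h | h
  · rw [gfun_of_nonneg h]; exact integrable_indicator_Ico 0 x
  · rw [gfun_of_neg h]; exact (integrable_indicator_Ico x 0).neg

lemma integral_indicator_Ico (a b : ℝ) (h : a ≤ b) :
    ∫ s, (Ico a b).indicator (fun _ => (1:ℝ)) s = b - a := by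
  rw [integral_indicator measurableSet_Ico]
  simp [Real.volume_Ico, ENNReal.toReal_ofReal (by linarith : (0:ℝ) ≤ b - a), h]

lemma integral_gfun (x : ℝ) : ∫ s, gfun x s = x := by
  rcases le_or_gt 0 x with h | h
  · rw [gfun_of_nonneg h, integral_indicator_Ico 0 x h]; ring
  · rw [gfun_of_neg h, integral_neg, integral_indicator_Ico x 0 h.le]; ring

lemma integral_abs_gfun (x : ℝ) : ∫ s, |gfun x s| = |x| := by
  rcases le_or_gt 0 x with h | h
  · have : (fun s => |gfun x s|) = (Ico (0:ℝ) x).indicator (fun _ => (1:ℝ)) := by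
      rw [gfun_of_nonneg h]
      funext s
      by_cases hs : s ∈ Ico (0:ℝ) x <;>
        simp [Set.indicator_of_mem, Set.indicator_of_notMem, hs]
    rw [this, integral_indicator_Ico 0 x h, abs_of_nonneg h]; ring
  · have : (fun s => |gfun x s|) = (Ico x (0:ℝ)).indicator (fun _ => (1:ℝ)) := by
      rw [gfun_of_neg h]
      funext s
      by_cases hs : s ∈ Ico x (0:ℝ) <;>
        simp [Set.indicator_of_mem, Set.indicator_of_notMem, hs]
    rw [this, integral_indicator_Ico x 0 h.le, abs_of_neg h]; ring

lemma abs_gfun_le (x s : ℝ) : |gfun x s| ≤ 1 := by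
  unfold gfun
  split_ifs <;> norm_num

lemma abs_mul_abs_le_half_sq (a b : ℝ) : |a| * |b| ≤ (a ^ 2 + b ^ 2) / 2 := by
  nlinarith [two_mul_le_add_sq |a| |b|, sq_abs a, sq_abs b, abs_nonneg a, abs_nonneg b]

lemma integrable_F (μ : Measure (ℝ × ℝ)) [IsProbabilityMeasure μ]
    (h1 : Integrable (fun z : ℝ × ℝ => z.1 ^ 2) μ)
    (h2 : Integrable (fun z : ℝ × ℝ => z.2 ^ 2) μ) :
    Integrable (Function.uncurry fun (z : ℝ × ℝ) (st : ℝ × ℝ) =>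
      gfun z.1 st.1 * gfun z.2 st.2) (μ.prod volume) := by
  have hmeas : Measurable (Function.uncurry fun (z : ℝ × ℝ) (st : ℝ × ℝ) =>
      gfun z.1 st.1 * gfun z.2 st.2) := by
    apply Measurable.mul
    · exact measurable_gfun.comp ((measurable_fst.fst).prodMk (measurable_snd.fst))
    · exact measurable_gfun.comp ((measurable_fst.snd).prodMk (measurable_snd.snd))
  rw [integrable_prod_iff hmeas.aestronglyMeasurable]
  constructor
  · refine Eventually.of_forall fun z => ?_
    rw [MeasureTheory.Measure.volume_eq_prod]
    exact (integrable_gfun z.1).mul_prod (integrable_gfun z.2)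
  · have hval : (fun z : ℝ × ℝ => ∫ st : ℝ × ℝ, ‖gfun z.1 st.1 * gfun z.2 st.2‖)
        = fun z : ℝ × ℝ => |z.1| * |z.2| := by
      funext z
      rw [MeasureTheory.Measure.volume_eq_prod]
      have he : (fun st : ℝ × ℝ => ‖gfun z.1 st.1 * gfun z.2 st.2‖)
          = fun st : ℝ × ℝ => |gfun z.1 st.1| * |gfun z.2 st.2| := by
        funext st; rw [Real.norm_eq_abs, abs_mul]
      rw [he, integral_prod_mul (fun s => |gfun z.1 s|) (fun t => |gfun z.2 t|),
        integral_abs_gfun, integral_abs_gfun]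
    have hval' : (fun x : ℝ × ℝ => ∫ y : ℝ × ℝ, ‖Function.uncurry
        (fun (z : ℝ × ℝ) (st : ℝ × ℝ) => gfun z.1 st.1 * gfun z.2 st.2) (x, y)‖ ∂volume)
        = fun z : ℝ × ℝ => |z.1| * |z.2| := by rw [← hval]; rfl
    rw [hval']
    refine Integrable.mono (((h1.add h2).div_const 2)) ?_ (Eventually.of_forall fun z => ?_)
    · exact ((measurable_fst.abs.mul measurable_snd.abs)).aestronglyMeasurable
    · rw [Real.norm_eq_abs, Real.norm_eq_abs,
        abs_of_nonneg (by positivity : (0:ℝ) ≤ |z.1| * |z.2|)]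
      exact le_trans (abs_mul_abs_le_half_sq _ _) (le_abs_self _)

lemma integral_xy_eq (μ : Measure (ℝ × ℝ)) [IsProbabilityMeasure μ]
    (h1 : Integrable (fun z : ℝ × ℝ => z.1 ^ 2) μ)
    (h2 : Integrable (fun z : ℝ × ℝ => z.2 ^ 2) μ) :
    ∫ z : ℝ × ℝ, z.1 * z.2 ∂μ
      = ∫ st : ℝ × ℝ, (∫ z : ℝ × ℝ, gfun z.1 st.1 * gfun z.2 st.2 ∂μ) := by
  have hpt : ∀ z : ℝ × ℝ, z.1 * z.2 = ∫ st : ℝ × ℝ, gfun z.1 st.1 * gfun z.2 st.2 := by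
    intro z
    rw [MeasureTheory.Measure.volume_eq_prod,
      integral_prod_mul (fun s => gfun z.1 s) (fun t => gfun z.2 t),
      integral_gfun, integral_gfun]
  calc ∫ z : ℝ × ℝ, z.1 * z.2 ∂μ
      = ∫ z : ℝ × ℝ, (∫ st : ℝ × ℝ, gfun z.1 st.1 * gfun z.2 st.2) ∂μ :=
        integral_congr_ae (Eventually.of_forall hpt)
    _ = ∫ st : ℝ × ℝ, (∫ z : ℝ × ℝ, gfun z.1 st.1 * gfun z.2 st.2 ∂μ) :=
        integral_integral_swap (integrable_F μ h1 h2)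

lemma preimage_fst_Ioi (s : ℝ) : Prod.fst ⁻¹' (Ioi s) = Ioi s ×ˢ (univ : Set ℝ) := by
  ext z; simp

lemma preimage_snd_Ioi (t : ℝ) : Prod.snd ⁻¹' (Ioi t) = (univ : Set ℝ) ×ˢ Ioi t := by
  ext z; simp

lemma G_eval (P Q : Measure ℝ) [IsProbabilityMeasure P] [IsProbabilityMeasure Q]
    (μ : Measure (ℝ × ℝ)) [IsProbabilityMeasure μ]
    (hf : μ.map Prod.fst = P) (hs : μ.map Prod.snd = Q) (s t : ℝ) :
    ∫ z : ℝ × ℝ, gfun z.1 s * gfun z.2 t ∂μ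
      = (μ (Ioi s ×ˢ Ioi t)).toReal
        - (if s < 0 then (1:ℝ) else 0) * (Q (Ioi t)).toReal
        - (if t < 0 then (1:ℝ) else 0) * (P (Ioi s)).toReal
        + (if s < 0 then (1:ℝ) else 0) * (if t < 0 then (1:ℝ) else 0) := by
  have hAB : MeasurableSet (Ioi s ×ˢ Ioi t : Set (ℝ × ℝ)) :=
    measurableSet_Ioi.prod measurableSet_Ioi
  have hB : MeasurableSet ((univ : Set ℝ) ×ˢ Ioi t) := MeasurableSet.univ.prod measurableSet_Ioi
  have hA : MeasurableSet (Ioi s ×ˢ (univ : Set ℝ)) := measurableSet_Ioi.prod MeasurableSet.univ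
  set es := (if s < 0 then (1:ℝ) else 0) with hes
  set et := (if t < 0 then (1:ℝ) else 0) with het
  have hpt : (fun z : ℝ × ℝ => gfun z.1 s * gfun z.2 t)
      = fun z : ℝ × ℝ =>
        (Ioi s ×ˢ Ioi t : Set (ℝ × ℝ)).indicator (fun _ => (1:ℝ)) z
        - es * (((univ : Set ℝ) ×ˢ Ioi t).indicator (fun _ => (1:ℝ)) z)
        - et * ((Ioi s ×ˢ (univ : Set ℝ)).indicator (fun _ => (1:ℝ)) z)
        + es * et := by
    funext z
    simp only [gfun, hes, het, Set.indicator_apply, mem_prod, mem_Ioi, mem_univ, true_and,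
      and_true]
    split_ifs <;> simp_all
  have i1 : Integrable ((Ioi s ×ˢ Ioi t : Set (ℝ × ℝ)).indicator (fun _ => (1:ℝ))) μ :=
    (integrable_const (1:ℝ)).indicator hAB
  have i2 : Integrable (((univ : Set ℝ) ×ˢ Ioi t).indicator (fun _ => (1:ℝ))) μ :=
    (integrable_const (1:ℝ)).indicator hB
  have i3 : Integrable ((Ioi s ×ˢ (univ : Set ℝ)).indicator (fun _ => (1:ℝ))) μ :=
    (integrable_const (1:ℝ)).indicator hA
  have I2 : Integrable (fun z : ℝ × ℝ =>
      (Ioi s ×ˢ Ioi t : Set (ℝ × ℝ)).indicator (fun _ => (1:ℝ)) z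
        - es * (((univ : Set ℝ) ×ˢ Ioi t).indicator (fun _ => (1:ℝ)) z)) μ :=
    i1.sub (i2.const_mul es)
  have I1 : Integrable (fun z : ℝ × ℝ =>
      (Ioi s ×ˢ Ioi t : Set (ℝ × ℝ)).indicator (fun _ => (1:ℝ)) z
        - es * (((univ : Set ℝ) ×ˢ Ioi t).indicator (fun _ => (1:ℝ)) z)
        - et * ((Ioi s ×ˢ (univ : Set ℝ)).indicator (fun _ => (1:ℝ)) z)) μ :=
    I2.sub (i3.const_mul et)
  rw [hpt]
  rw [integral_add I1 (integrable_const (es * et)),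
    integral_sub I2 (i3.const_mul et),
    integral_sub i1 (i2.const_mul es), MeasureTheory.integral_const_mul, MeasureTheory.integral_const_mul, integral_const]
  have e1 : ∫ z : ℝ × ℝ, (Ioi s ×ˢ Ioi t : Set (ℝ × ℝ)).indicator (fun _ => (1:ℝ)) z ∂μ
      = (μ (Ioi s ×ˢ Ioi t)).toReal := integral_indicator_one hAB
  have e2 : ∫ z : ℝ × ℝ, ((univ : Set ℝ) ×ˢ Ioi t).indicator (fun _ => (1:ℝ)) z ∂μ
      = (Q (Ioi t)).toReal := by
    rw [← hs, Measure.map_apply measurable_snd measurableSet_Ioi, preimage_snd_Ioi]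
    exact integral_indicator_one hB
  have e3 : ∫ z : ℝ × ℝ, (Ioi s ×ˢ (univ : Set ℝ)).indicator (fun _ => (1:ℝ)) z ∂μ
      = (P (Ioi s)).toReal := by
    rw [← hf, Measure.map_apply measurable_fst measurableSet_Ioi, preimage_fst_Ioi]
    exact integral_indicator_one hA
  rw [e1, e2, e3]
  simp [measure_univ]

lemma coupling_sq_integrable (P : Measure ℝ) [IsProbabilityMeasure P]
    (μ : Measure (ℝ × ℝ)) [IsProbabilityMeasure μ]
    (hf : μ.map Prod.fst = P) (hP2 : Integrable (fun x : ℝ => x ^ 2) P) :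
    Integrable (fun z : ℝ × ℝ => z.1 ^ 2) μ := by
  rw [← hf] at hP2
  exact (integrable_map_measure (measurable_id.pow_const 2).aestronglyMeasurable
    measurable_fst.aemeasurable).mp hP2

lemma coupling_sq_integrable' (Q : Measure ℝ) [IsProbabilityMeasure Q]
    (μ : Measure (ℝ × ℝ)) [IsProbabilityMeasure μ]
    (hs : μ.map Prod.snd = Q) (hQ2 : Integrable (fun x : ℝ => x ^ 2) Q) :
    Integrable (fun z : ℝ × ℝ => z.2 ^ 2) μ := by
  rw [← hs] at hQ2
  exact (integrable_map_measure (measurable_id.pow_const 2).aestronglyMeasurable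
    measurable_snd.aemeasurable).mp hQ2

lemma coupling_xy_integrable (μ : Measure (ℝ × ℝ)) [IsProbabilityMeasure μ]
    (h1 : Integrable (fun z : ℝ × ℝ => z.1 ^ 2) μ)
    (h2 : Integrable (fun z : ℝ × ℝ => z.2 ^ 2) μ) :
    Integrable (fun z : ℝ × ℝ => z.1 * z.2) μ := by
  refine Integrable.mono ((h1.add h2).div_const 2)
    (measurable_fst.mul measurable_snd).aestronglyMeasurable
    (Eventually.of_forall fun z => ?_)
  rw [Real.norm_eq_abs, Real.norm_eq_abs, abs_mul]
  exact le_trans (abs_mul_abs_le_half_sq _ _) (le_abs_self _)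

lemma xy_le (P Q : Measure ℝ) [IsProbabilityMeasure P] [IsProbabilityMeasure Q]
    (π πQ : Measure (ℝ × ℝ)) [IsProbabilityMeasure π] [IsProbabilityMeasure πQ]
    (hπ1 : π.map Prod.fst = P) (hπ2 : π.map Prod.snd = Q)
    (hQ1 : πQ.map Prod.fst = P) (hQ2 : πQ.map Prod.snd = Q)
    (hP2 : Integrable (fun x : ℝ => x ^ 2) P) (hQsq : Integrable (fun x : ℝ => x ^ 2) Q)
    (hmin : ∀ s t : ℝ, πQ (Ioi s ×ˢ Ioi t) = min (P (Ioi s)) (Q (Ioi t))) :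
    ∫ z : ℝ × ℝ, z.1 * z.2 ∂π ≤ ∫ z : ℝ × ℝ, z.1 * z.2 ∂πQ := by
  have hπ11 := coupling_sq_integrable P π hπ1 hP2
  have hπ22 := coupling_sq_integrable' Q π hπ2 hQsq
  have hQ11 := coupling_sq_integrable P πQ hQ1 hP2
  have hQ22 := coupling_sq_integrable' Q πQ hQ2 hQsq
  rw [integral_xy_eq π hπ11 hπ22, integral_xy_eq πQ hQ11 hQ22]
  have intπ : Integrable (fun st : ℝ × ℝ => ∫ z : ℝ × ℝ, gfun z.1 st.1 * gfun z.2 st.2 ∂π)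
      volume := by
    have := (integrable_F π hπ11 hπ22).integral_prod_right
    exact this
  have intπQ : Integrable (fun st : ℝ × ℝ => ∫ z : ℝ × ℝ, gfun z.1 st.1 * gfun z.2 st.2 ∂πQ)
      volume := by
    have := (integrable_F πQ hQ11 hQ22).integral_prod_right
    exact this
  refine integral_mono intπ intπQ fun st => ?_
  rw [G_eval P Q π hπ1 hπ2 st.1 st.2, G_eval P Q πQ hQ1 hQ2 st.1 st.2]
  have hle : (π (Ioi st.1 ×ˢ Ioi st.2)).toReal ≤ (πQ (Ioi st.1 ×ˢ Ioi st.2)).toReal := by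
    refine ENNReal.toReal_mono (measure_ne_top πQ _) ?_
    rw [hmin st.1 st.2, le_min_iff]
    constructor
    · rw [← hπ1, Measure.map_apply measurable_fst measurableSet_Ioi, preimage_fst_Ioi]
      exact measure_mono (prod_mono_right (subset_univ _))
    · rw [← hπ2, Measure.map_apply measurable_snd measurableSet_Ioi, preimage_snd_Ioi]
      exact measure_mono (prod_mono_left (subset_univ _))
  linarith

lemma sq_expand (μ : Measure (ℝ × ℝ)) [IsProbabilityMeasure μ]
    (h1 : Integrable (fun z : ℝ × ℝ => z.1 ^ 2) μ)
    (h2 : Integrable (fun z : ℝ × ℝ => z.2 ^ 2) μ) :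
    ∫ z : ℝ × ℝ, (z.1 - z.2) ^ 2 ∂μ
      = (∫ z : ℝ × ℝ, z.1 ^ 2 ∂μ) + (∫ z : ℝ × ℝ, z.2 ^ 2 ∂μ)
        - 2 * ∫ z : ℝ × ℝ, z.1 * z.2 ∂μ := by
  have hxy := coupling_xy_integrable μ h1 h2
  have hpt : (fun z : ℝ × ℝ => (z.1 - z.2) ^ 2)
      = fun z : ℝ × ℝ => z.1 ^ 2 + z.2 ^ 2 - 2 * (z.1 * z.2) := by
    funext z; ring
  have hadd : Integrable (fun z : ℝ × ℝ => z.1 ^ 2 + z.2 ^ 2) μ := h1.add h2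
  rw [hpt, integral_sub hadd (hxy.const_mul 2), integral_add h1 h2,
    MeasureTheory.integral_const_mul]

lemma Ioi_compl_measure (P : Measure ℝ) [IsProbabilityMeasure P] (s : ℝ) :
    P (Ioi s) = ENNReal.ofReal (1 - cdf P s) := by
  have hc := measure_compl (measurableSet_Iic : MeasurableSet (Iic s)) (measure_ne_top P _)
  rw [compl_Iic] at hc
  have hIic : P (Iic s) = ENNReal.ofReal (cdf P s) :=
    (ENNReal.ofReal_toReal (measure_ne_top P _)).symm
  rw [hc, measure_univ, hIic, ← ENNReal.ofReal_one,
    ← ENNReal.ofReal_sub _ (cdf_nonneg' P s)]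

lemma quantile_coupling_min (P Q : Measure ℝ) [IsProbabilityMeasure P] [IsProbabilityMeasure Q]
    (s t : ℝ) :
    ((volume.restrict (Ioo (0:ℝ) 1)).map (fun u => (quantile P u, quantile Q u)))
      (Ioi s ×ˢ Ioi t) = min (P (Ioi s)) (Q (Ioi t)) := by
  have hfm : AEMeasurable (fun u => (quantile P u, quantile Q u))
      (volume.restrict (Ioo (0:ℝ) 1)) :=
    (aemeasurable_quantile P).prodMk (aemeasurable_quantile Q)
  rw [Measure.map_apply_of_aemeasurable hfm (measurableSet_Ioi.prod measurableSet_Ioi),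
    Measure.restrict_apply' measurableSet_Ioo]
  have hset : (fun u => (quantile P u, quantile Q u)) ⁻¹' (Ioi s ×ˢ Ioi t) ∩ Ioo 0 1
      = Ioo (max (cdf P s) (cdf Q t)) 1 := by
    ext u
    simp only [mem_inter_iff, mem_preimage, mem_prod, mem_Ioi, mem_Ioo, max_lt_iff]
    constructor
    · rintro ⟨⟨h1, h2⟩, h3⟩
      exact ⟨⟨(lt_quantile_iff P h3 s).mp h1, (lt_quantile_iff Q h3 t).mp h2⟩, h3.2⟩
    · rintro ⟨⟨h1, h2⟩, h3⟩
      have hu : u ∈ Ioo (0:ℝ) 1 := ⟨lt_of_le_of_lt (cdf_nonneg' P s) h1, h3⟩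
      exact ⟨⟨(lt_quantile_iff P hu s).mpr h1, (lt_quantile_iff Q hu t).mpr h2⟩, hu⟩
  rw [hset, Real.volume_Ioo, Ioi_compl_measure P s, Ioi_compl_measure Q t]
  rcases le_total (cdf P s) (cdf Q t) with h | h
  · rw [max_eq_right h, min_eq_right (ENNReal.ofReal_le_ofReal (by linarith))]
  · rw [max_eq_left h, min_eq_left (ENNReal.ofReal_le_ofReal (by linarith))]

lemma pair_ineq (P Q : Measure ℝ) [IsProbabilityMeasure P] [IsProbabilityMeasure Q]
    (hP2 : Integrable (fun x : ℝ => x ^ 2) P)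
    (hQ2 : Integrable (fun x : ℝ => x ^ 2) Q)
    (π : Measure (ℝ × ℝ)) [IsProbabilityMeasure π]
    (hπ1 : π.map Prod.fst = P) (hπ2 : π.map Prod.snd = Q) :
    ∫ u in Ioo (0:ℝ) 1, (quantile P u - quantile Q u) ^ 2
      ≤ ∫ z : ℝ × ℝ, (z.1 - z.2) ^ 2 ∂π := by
  set ν := volume.restrict (Ioo (0:ℝ) 1) with hν
  set f : ℝ → ℝ × ℝ := fun u => (quantile P u, quantile Q u) with hfdef
  have hfm : AEMeasurable f ν := (aemeasurable_quantile P).prodMk (aemeasurable_quantile Q)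
  set πQ := ν.map f with hπQ
  have : IsProbabilityMeasure πQ := Measure.isProbabilityMeasure_map hfm
  have marg1 : πQ.map Prod.fst = P := by
    rw [hπQ, AEMeasurable.map_map_of_aemeasurable measurable_fst.aemeasurable hfm]
    exact map_quantile P
  have marg2 : πQ.map Prod.snd = Q := by
    rw [hπQ, AEMeasurable.map_map_of_aemeasurable measurable_snd.aemeasurable hfm]
    exact map_quantile Q
  have hπ11 := coupling_sq_integrable P π hπ1 hP2
  have hπ22 := coupling_sq_integrable' Q π hπ2 hQ2
  have hQ11 := coupling_sq_integrable P πQ marg1 hP2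
  have hQ22 := coupling_sq_integrable' Q πQ marg2 hQ2
  have hLHS : ∫ u in Ioo (0:ℝ) 1, (quantile P u - quantile Q u) ^ 2
      = ∫ z : ℝ × ℝ, (z.1 - z.2) ^ 2 ∂πQ := by
    rw [hπQ, integral_map (f := fun z : ℝ × ℝ => (z.1 - z.2) ^ 2) hfm
      ((measurable_fst.sub measurable_snd).pow_const 2).aestronglyMeasurable]
  have hfst : ∫ z : ℝ × ℝ, z.1 ^ 2 ∂π = ∫ z : ℝ × ℝ, z.1 ^ 2 ∂πQ := by
    have e1 : ∫ x : ℝ, x ^ 2 ∂P = ∫ z : ℝ × ℝ, z.1 ^ 2 ∂π := by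
      rw [← hπ1, integral_map (f := fun x : ℝ => x ^ 2) measurable_fst.aemeasurable
        (measurable_id.pow_const 2).aestronglyMeasurable]
    have e2 : ∫ x : ℝ, x ^ 2 ∂P = ∫ z : ℝ × ℝ, z.1 ^ 2 ∂πQ := by
      rw [← marg1, integral_map (f := fun x : ℝ => x ^ 2) measurable_fst.aemeasurable
        (measurable_id.pow_const 2).aestronglyMeasurable]
    rw [← e1, e2]
  have hsnd : ∫ z : ℝ × ℝ, z.2 ^ 2 ∂π = ∫ z : ℝ × ℝ, z.2 ^ 2 ∂πQ := by
    have e1 : ∫ x : ℝ, x ^ 2 ∂Q = ∫ z : ℝ × ℝ, z.2 ^ 2 ∂π := by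
      rw [← hπ2, integral_map (f := fun x : ℝ => x ^ 2) measurable_snd.aemeasurable
        (measurable_id.pow_const 2).aestronglyMeasurable]
    have e2 : ∫ x : ℝ, x ^ 2 ∂Q = ∫ z : ℝ × ℝ, z.2 ^ 2 ∂πQ := by
      rw [← marg2, integral_map (f := fun x : ℝ => x ^ 2) measurable_snd.aemeasurable
        (measurable_id.pow_const 2).aestronglyMeasurable]
    rw [← e1, e2]
  have hxy := xy_le P Q π πQ hπ1 hπ2 marg1 marg2 hP2 hQ2
    (fun s t => quantile_coupling_min P Q s t)
  rw [hLHS, sq_expand π hπ11 hπ22, sq_expand πQ hQ11 hQ22, hfst, hsnd]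
  linarith

/-- The quantile coupling minimizes the quadratic causal effect
ψ(J) = Σ_{i<j} E_J[(Y_i − Y_j)²] over all joint laws with the given marginals. -/
theorem quantile_coupling_minimizes_quadratic_effect
    (k : ℕ) (P : Fin k → Measure ℝ) [∀ i, IsProbabilityMeasure (P i)]
    (hm : ∀ i, Integrable (fun y : ℝ => y ^ 2) (P i))
    (J : Measure (Fin k → ℝ)) [IsProbabilityMeasure J]
    (hmarg : ∀ i, J.map (fun y => y i) = P i) :
    ((∑ p ∈ Finset.univ.filter (fun p : Fin k × Fin k => p.1 < p.2),
        ∫ u in Ioo (0:ℝ) 1, (quantile (P p.1) u - quantile (P p.2) u) ^ 2)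
      ≤ ∑ p ∈ Finset.univ.filter (fun p : Fin k × Fin k => p.1 < p.2),
          ∫ y, (y p.1 - y p.2) ^ 2 ∂J) ∧
    (J = (volume.restrict (Ioo (0:ℝ) 1)).map (fun u i => quantile (P i) u) →
      (∑ p ∈ Finset.univ.filter (fun p : Fin k × Fin k => p.1 < p.2),
          ∫ y, (y p.1 - y p.2) ^ 2 ∂J)
        = ∑ p ∈ Finset.univ.filter (fun p : Fin k × Fin k => p.1 < p.2),
            ∫ u in Ioo (0:ℝ) 1, (quantile (P p.1) u - quantile (P p.2) u) ^ 2) := by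
  constructor
  · refine Finset.sum_le_sum fun p _ => ?_
    have hmeas_pair : Measurable (fun y : Fin k → ℝ => (y p.1, y p.2)) :=
      (measurable_pi_apply p.1).prodMk (measurable_pi_apply p.2)
    set π := J.map (fun y : Fin k → ℝ => (y p.1, y p.2)) with hπ
    have : IsProbabilityMeasure π := Measure.isProbabilityMeasure_map hmeas_pair.aemeasurable
    have h1 : π.map Prod.fst = P p.1 := by
      rw [hπ, Measure.map_map measurable_fst hmeas_pair]
      exact hmarg p.1
    have h2 : π.map Prod.snd = P p.2 := by
      rw [hπ, Measure.map_map measurable_snd hmeas_pair]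
      exact hmarg p.2
    have hint : ∫ z : ℝ × ℝ, (z.1 - z.2) ^ 2 ∂π = ∫ y, (y p.1 - y p.2) ^ 2 ∂J := by
      rw [hπ, integral_map (f := fun z : ℝ × ℝ => (z.1 - z.2) ^ 2) hmeas_pair.aemeasurable
        ((measurable_fst.sub measurable_snd).pow_const 2).aestronglyMeasurable]
    rw [← hint]
    exact pair_ineq (P p.1) (P p.2) (hm p.1) (hm p.2) π h1 h2
  · intro hJ
    have hF : AEMeasurable (fun u : ℝ => fun i => quantile (P i) u)
        (volume.restrict (Ioo (0:ℝ) 1)) := by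
      refine ⟨fun u => fun i => (aemeasurable_quantile (P i)).mk _ u,
        measurable_pi_lambda _ fun i => (aemeasurable_quantile (P i)).measurable_mk, ?_⟩
      have hae : ∀ᵐ u ∂(volume.restrict (Ioo (0:ℝ) 1)),
          ∀ i, quantile (P i) u = (aemeasurable_quantile (P i)).mk _ u :=
        ae_all_iff.mpr fun i => (aemeasurable_quantile (P i)).ae_eq_mk
      filter_upwards [hae] with u hu
      funext i
      exact hu i
    refine Finset.sum_congr rfl fun p _ => ?_
    rw [hJ, integral_map (f := fun y : Fin k → ℝ => (y p.1 - y p.2) ^ 2) hF (((measurable_pi_apply p.1).sub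
      (measurable_pi_apply p.2)).pow_const 2).aestronglyMeasurable]
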